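/- arXiv:2301.06274 — 2 statements merged into one kernel-verified Lean document; each statement's English description precedes it below -/
import Mathlib

section
/- Let A be a left brace such that A³ = ⟨0⟩. Then gⁿ ⋆ z = n·(g ⋆ z) for every integer n and all elements g, z ∈ A, where gⁿ denotes the n-th power of g in the multiplicative group of A and n·(g ⋆ z) denotes the n-th additive multiple. -/
/-- A left brace: `(A, +)` is an abelian group, `(A, *)` is a group, and
`a * (b + c) = a * b + a * c - a` for all `a b c`. -/
class LeftBrace (A : Type*) extends AddCommGroup A, Group A where
  mul_add_eq : ∀ a b c : A, a * (b + c) = a * b + a * c - a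

namespace LeftBrace

variable {A : Type*} [LeftBrace A]

/-- The star operation of a left brace: `a ⋆ b = a * b - a - b`. -/
def star (a b : A) : A := a * b - a - b

/-- `K ⋆ L`: the subgroup of the additive group of `A` generated by all
`x ⋆ y` with `x ∈ K`, `y ∈ L`. -/
def setStar (K L : Set A) : AddSubgroup A :=
  AddSubgroup.closure (Set.image2 star K L)

/-- A subbrace of `A`: a subset that is simultaneously a subgroup of the
additive group of `A` and a subgroup of the multiplicative group of `A`. -/
def IsSubbrace (S : Set A) : Prop :=
  (0 : A) ∈ S ∧ (∀ x ∈ S, ∀ y ∈ S, x + y ∈ S) ∧ (∀ x ∈ S, -x ∈ S) ∧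
    (1 : A) ∈ S ∧ (∀ x ∈ S, ∀ y ∈ S, x * y ∈ S) ∧ (∀ x ∈ S, x⁻¹ ∈ S)

/-- A left ideal of `A`: a subbrace `S` with `a ⋆ b ∈ S` for all `a ∈ A`, `b ∈ S`. -/
def IsLeftIdeal (S : Set A) : Prop :=
  IsSubbrace S ∧ ∀ a : A, ∀ b ∈ S, star a b ∈ S

/-- An ideal of `A`: a subbrace `S` with `a ⋆ z ∈ S` and `z ⋆ a ∈ S`
for all `a ∈ A`, `z ∈ S`. -/
def IsIdeal (S : Set A) : Prop :=
  IsSubbrace S ∧ ∀ a : A, ∀ z ∈ S, star a z ∈ S ∧ star z a ∈ S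

/-- The left series of the brace `A`, with the indexing shifted by one:
`leftSeriesN A 0 = A¹ = A` and `leftSeriesN A n = Aⁿ⁺¹ = A ⋆ Aⁿ`.
In particular `leftSeriesN A 1 = A²` and `leftSeriesN A 2 = A³`. -/
def leftSeriesN (A : Type*) [LeftBrace A] : ℕ → AddSubgroup A
  | 0 => ⊤
  | n + 1 => setStar Set.univ ((leftSeriesN A n : AddSubgroup A) : Set A)

/-- The right series of the brace `A`, with the indexing shifted by one:
`rightSeriesN A 0 = A⁽¹⁾ = A` and `rightSeriesN A n = A⁽ⁿ⁺¹⁾ = A⁽ⁿ⁾ ⋆ A`.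
In particular `rightSeriesN A 2 = A⁽³⁾` and `rightSeriesN A 3 = A⁽⁴⁾`. -/
def rightSeriesN (A : Type*) [LeftBrace A] : ℕ → AddSubgroup A
  | 0 => ⊤
  | n + 1 => setStar ((rightSeriesN A n : AddSubgroup A) : Set A) Set.univ

end LeftBrace

open LeftBrace

section Aux

variable {A : Type*} [LeftBrace A]

lemma my_mul_zero (a : A) : a * 0 = a := by
  have h := LeftBrace.mul_add_eq a 0 0
  rw [add_zero] at h
  have h2 : a * 0 + a = a * 0 + a * 0 := by
    nth_rewrite 1 [h]; abel
  exact (add_left_cancel h2).symm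

lemma my_one_eq_zero : (1 : A) = 0 := by
  have := my_mul_zero (1 : A)
  rw [one_mul] at this; exact this.symm

lemma my_mul_neg (a x : A) : a * (-x) = a + a - a * x := by
  have h := LeftBrace.mul_add_eq a x (-x)
  rw [add_neg_cancel, my_mul_zero] at h
  calc a * (-x) = (a * x + a * (-x) - a) + a - a * x := by abel
    _ = a + a - a * x := by rw [← h]

lemma my_star_mul (a b z : A) :
    star (a * b) z = star a (star b z) + star a z + star b z := by
  unfold LeftBrace.star
  have h1 : a * (b * z - b - z) = a * (b * z) + (a + a - a * (b + z)) - a := by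
    have hx : b * z - b - z = b * z + (-(b + z)) := by abel
    rw [hx, LeftBrace.mul_add_eq, my_mul_neg]
  rw [h1, LeftBrace.mul_add_eq, ← mul_assoc]
  abel

lemma my_star_star_zero (h3 : leftSeriesN A 2 = ⊥) (a b x : A) :
    star a (star b x) = 0 := by
  have hm : star b x ∈ leftSeriesN A 1 := by
    apply AddSubgroup.subset_closure
    exact Set.mem_image2_of_mem (Set.mem_univ b)
      (SetLike.mem_coe.mpr (AddSubgroup.mem_top x))
  have hm2 : star a (star b x) ∈ leftSeriesN A 2 := by
    apply AddSubgroup.subset_closure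
    exact Set.mem_image2_of_mem (Set.mem_univ a) (SetLike.mem_coe.mpr hm)
  rw [h3] at hm2
  exact AddSubgroup.mem_bot.mp hm2

lemma my_star_mul' (h3 : leftSeriesN A 2 = ⊥) (a b z : A) :
    star (a * b) z = star a z + star b z := by
  rw [my_star_mul, my_star_star_zero h3, zero_add]

lemma my_star_one (z : A) : star (1 : A) z = 0 := by
  unfold LeftBrace.star
  rw [one_mul, my_one_eq_zero]
  abel

lemma my_star_inv (h3 : leftSeriesN A 2 = ⊥) (g z : A) :
    star g⁻¹ z = - star g z := by
  have h := my_star_mul' h3 g g⁻¹ z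
  rw [mul_inv_cancel, my_star_one] at h
  exact eq_neg_of_add_eq_zero_right h.symm

end Aux

/-- If `A` is a left brace with `A³ = ⟨0⟩` (here
`A³ = A ⋆ (A ⋆ A) = leftSeriesN A 2`), then `gⁿ ⋆ z = n·(g ⋆ z)` for every
integer `n` and all `g z ∈ A`. -/
theorem zpow_star {A : Type*} [LeftBrace A]
    (h3 : leftSeriesN A 2 = ⊥) (n : ℤ) (g z : A) :
    star (g ^ n) z = n • star g z := by
  induction n using Int.induction_on with
  | zero => rw [zpow_zero, my_star_one, zero_smul]
  | succ k ih =>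
      rw [zpow_add_one, my_star_mul' h3, ih, add_smul, one_smul]
  | pred k ih =>
      rw [zpow_sub_one, my_star_mul' h3, ih, my_star_inv h3, sub_smul, one_smul,
        sub_eq_add_neg]
end

section
/- Let A be a left brace such that A³ = ⟨0⟩. Then for every element a ∈ A and all integers n, k one has (n·a) ⋆ (k·a) = k·n·(a ⋆ a) + ((n − n²)/2)·k·((a ⋆ a) ⋆ a), where n·a denotes the n-th additive multiple of a and (n − n²)/2 is an integer. -/
namespace LeftBrace

variable {A : Type*} [LeftBrace A]

section Aux
variable {A : Type*} [LeftBrace A]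

lemma zero_eq_one' : (0 : A) = 1 := by
  have h := LeftBrace.mul_add_eq (1 : A) 0 0
  simp only [one_mul, add_zero] at h
  have h2 : (0:A) = -1 := by rw [h]; abel
  exact (neg_eq_zero.mp h2.symm).symm

lemma mul_zero' (a : A) : a * 0 = a := by rw [zero_eq_one', mul_one]

lemma star_add_right (a b c : A) : star a (b + c) = star a b + star a c := by
  simp only [star, LeftBrace.mul_add_eq]; abel

def starHom (a : A) : A →+ A := AddMonoidHom.mk' (star a) (star_add_right a)

lemma star_neg_right (a b : A) : star a (-b) = - star a b := by
  simpa [starHom] using (starHom a).map_neg b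

lemma star_zsmul_right (a : A) (k : ℤ) (b : A) : star a (k • b) = k • star a b := by
  simpa [starHom] using map_zsmul (starHom a) k b

lemma zero_star (c : A) : star (0:A) c = 0 := by
  have h0c : (0:A) * c = c := by rw [zero_eq_one', one_mul]
  simp [star, h0c]

lemma mul_neg' (a b : A) : a * (-b) = a + a - a * b := by
  have h := LeftBrace.mul_add_eq a b (-b)
  rw [add_neg_cancel, mul_zero'] at h
  rw [eq_sub_iff_add_eq] at h
  rw [h]; abel

lemma mul_sub' (a b c : A) : a * (b - c) = a * b - a * c + a := by
  rw [sub_eq_add_neg, LeftBrace.mul_add_eq, mul_neg']; abel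

lemma mul_star (x w c : A) : star (x * w) c = star x (star w c) + star w c + star x c := by
  simp only [star, mul_sub', mul_assoc]; abel


end Aux

section Key
variable {A : Type*} [LeftBrace A]
variable (H : ∀ x y z : A, star x (star y z) = 0)
include H

lemma star_add_left (x y c : A) :
    star (x + y) c = star (y - star x y) c + star x c := by
  have hxw : x * (x⁻¹ * (y + x)) = x + y := by
    rw [← mul_assoc, mul_inv_cancel, one_mul, add_comm]
  set w := x⁻¹ * (y + x) with hwdef
  have hsw : star x w = y - w := by rw [star, hxw]; abel
  have h1 : star x y = star x w := by
    have hy : y = w + star x w := by rw [hsw]; abel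
    rw [hy, star_add_right, H x x w, add_zero]
  have hw : w = y - star x y := by rw [h1, hsw]; abel
  calc star (x + y) c = star (x * w) c := by rw [hxw]
    _ = star x (star w c) + star w c + star x c := mul_star x w c
    _ = star (y - star x y) c + star x c := by rw [H x w c, ← hw, zero_add]

lemma star_add_left_of_right_killed {y : A} (hy : ∀ x : A, star x y = 0) (x c : A) :
    star (x + y) c = star y c + star x c := by
  rw [star_add_left H, hy x, sub_zero]

lemma star_neg_left_of_killed {q : A} (hq : ∀ x : A, star x q = 0) (c : A) :
    star (-q) c = - star q c := by
  have h := star_add_left H q (-q) c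
  rw [add_neg_cancel, zero_star, star_neg_right, hq q, neg_zero, sub_zero] at h
  -- h : 0 = star (-q) c + star q c
  have := h.symm
  rw [add_eq_zero_iff_eq_neg] at this
  exact this


lemma star_zsmul_left_of_killed {q : A} (hq : ∀ x : A, star x q = 0) (c : A) :
    ∀ m : ℤ, star (m • q) c = m • star q c := by
  have hqn : ∀ x : A, star x (-q) = 0 := fun x => by rw [star_neg_right, hq x, neg_zero]
  intro m
  induction m using Int.induction_on with
  | zero => simp [zero_star]
  | succ i ih =>
      have h1 : ((i : ℤ) + 1) • q = (i : ℤ) • q + q := by rw [add_smul, one_smul]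
      rw [h1, star_add_left_of_right_killed H hq, ih, add_smul, one_smul]
      abel
  | pred i ih =>
      have h1 : (-(i : ℤ) - 1) • q = (-(i : ℤ)) • q + (-q) := by
        rw [sub_smul, one_smul, sub_eq_add_neg]
      rw [h1, star_add_left_of_right_killed H hqn, ih,
        star_neg_left_of_killed H hq, sub_smul, one_smul]
      abel

lemma star_star_left_of_killed {q : A} (hq : ∀ x : A, star x q = 0) (b c : A) :
    star (star q b) c = 0 := by
  have hqn : ∀ x : A, star x (-q) = 0 := fun x => by rw [star_neg_right, hq x, neg_zero]
  set p := q * b with hp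
  have h1 : ∀ c' : A, star p c' = star b c' + star q c' := by
    intro c'; rw [hp, mul_star, H q b c', zero_add]
  have h2 : ∀ c' : A, star (p - q) c' = star b c' := by
    intro c'
    rw [sub_eq_add_neg, star_add_left_of_right_killed H hqn,
      star_neg_left_of_killed H hq, h1]
    abel
  have h3 : star (-b + star b b) c = - star b c := by
    have h := star_add_left H b (-b) c
    rw [add_neg_cancel, zero_star, star_neg_right] at h
    have h' : -b - -star b b = -b + star b b := by abel
    rw [h'] at h
    have := h.symm
    rw [add_eq_zero_iff_eq_neg] at this
    exact this
  have hu : star q b = (p - q) + (-b) := by rw [hp, star]; abel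
  rw [hu, star_add_left H, star_neg_right, h2 b, h2 c]
  have h4 : -b - -star b b = -b + star b b := by abel
  rw [h4, h3]
  abel

/-- succ recursion -/
lemma star_add_one (x a c : A) :
    star (x + a) c = star a c + star x c - star (star x a) c := by
  have hz : ∀ w : A, star w (star x a) = 0 := fun w => H w x a
  have hzn : ∀ w : A, star w (-(star x a)) = 0 := fun w => by
    rw [star_neg_right, hz w, neg_zero]
  have h1 : star (a - star x a) c = - star (star x a) c + star a c := by
    rw [sub_eq_add_neg, star_add_left_of_right_killed H hzn,
      star_neg_left_of_killed H hz]
  rw [star_add_left H, h1]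
  abel

/-- pred recursion -/
lemma star_sub_one (x a c : A) :
    star (x - a) c = star x c + star (star x a) c - star a c - star (star a a) c := by
  have hz : ∀ w : A, star w (star x a) = 0 := fun w => H w x a
  have hq : ∀ w : A, star w (star a a) = 0 := fun w => H w a a
  have hz'_left : ∀ c' : A, star (star (star x a) a) c' = 0 := fun c' =>
    star_star_left_of_killed H hz a c'
  have step4 : star (-a) c = - star a c - star (star a a) c := by
    have h := star_add_left H a (-a) c
    rw [add_neg_cancel, zero_star, star_neg_right] at h
    have e1 : -a - -star a a = -a + star a a := by abel
    rw [e1, star_add_left_of_right_killed H hq] at h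
    -- h : 0 = star (star a a) c + star (-a) c + star a c
    have h2 : star (-a) c =
        (star (star a a) c + star (-a) c + star a c) - star a c - star (star a a) c := by
      abel
    rw [← h] at h2
    rw [h2]; abel
  have step3 : star (-a + star (star x a) a) c = star (-a) c := by
    have e1 : -a + star (star x a) a = star (star x a) a + -a := by abel
    rw [e1, star_add_left H, star_neg_right, hz'_left a, hz'_left c, neg_zero, sub_zero,
      add_zero]
  have step2 : star (-a + star x a) c = star (-a) c + star (star x a) c := by
    have e1 : -a + star x a = star x a + -a := by abel
    rw [e1, star_add_left H, star_neg_right]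
    have e2 : -a - -star (star x a) a = -a + star (star x a) a := by abel
    rw [e2, step3]
  have step1 : star (x - a) c = star (-a + star x a) c + star x c := by
    rw [sub_eq_add_neg, star_add_left H, star_neg_right]
    have e2 : -a - -star x a = -a + star x a := by abel
    rw [e2]
  rw [step1, step2, step4]
  abel


lemma star_combo (a : A) (n m : ℤ) :
    star (n • star a a + m • star (star a a) a) a = n • star (star a a) a := by
  have hq : ∀ x : A, star x (star a a) = 0 := fun x => H x a a
  have hs : ∀ x : A, star x (star (star a a) a) = 0 := fun x => H x (star a a) a
  have hsl : ∀ c : A, star (star (star a a) a) c = 0 := fun c =>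
    star_star_left_of_killed H hq a c
  have hms : ∀ x : A, star x (m • star (star a a) a) = 0 := fun x => by
    rw [star_zsmul_right, hs x, smul_zero]
  rw [star_add_left_of_right_killed H hms,
    star_zsmul_left_of_killed H hs, hsl a, smul_zero, zero_add,
    star_zsmul_left_of_killed H hq]

omit H in
lemma coeff_succ (n : ℤ) : ((n+1) - (n+1)^2)/2 = (n - n^2)/2 + -n := by
  have h : (n+1) - (n+1)^2 = (n - n^2) + (-n)*2 := by ring
  rw [h, Int.add_mul_ediv_right _ _ (by norm_num : (2:ℤ) ≠ 0)]

omit H in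
lemma coeff_pred (n : ℤ) : ((n-1) - (n-1)^2)/2 = (n - n^2)/2 + (n-1) := by
  have h : (n-1) - (n-1)^2 = (n - n^2) + (n-1)*2 := by ring
  rw [h, Int.add_mul_ediv_right _ _ (by norm_num : (2:ℤ) ≠ 0)]

lemma main_formula (a : A) : ∀ n : ℤ,
    star (n • a) a = n • star a a + ((n - n^2)/2) • star (star a a) a := by
  intro n
  induction n using Int.induction_on with
  | zero => simp [zero_star]
  | succ i ih =>
      have e : ((i:ℤ)+1) • a = (i:ℤ) • a + a := by rw [add_smul, one_smul]
      rw [e, star_add_one H, ih, star_combo H, coeff_succ]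
      module
  | pred i ih =>
      have e : (-(i:ℤ)-1) • a = (-(i:ℤ)) • a - a := by rw [sub_smul, one_smul]
      rw [e, star_sub_one H, ih, star_combo H, coeff_pred]
      module

end Key

end LeftBrace

open LeftBrace

/-- If `A` is a left brace with `A³ = ⟨0⟩` (here
`A³ = A ⋆ (A ⋆ A) = leftSeriesN A 2`), then for every `a ∈ A` and all integers
`n, k` one has `(n·a) ⋆ (k·a) = k·n·(a ⋆ a) + ((n − n²)/2)·k·((a ⋆ a) ⋆ a)`
(note that `n − n²` is even, so the integer division `(n − n²)/2` is exact). -/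
theorem smul_star_smul {A : Type*} [LeftBrace A]
    (h3 : leftSeriesN A 2 = ⊥) (a : A) (n k : ℤ) :
    star (n • a) (k • a) =
      (k * n) • star a a + (((n - n ^ 2) / 2) * k) • star (star a a) a := by

  have H : ∀ x y z : A, star x (star y z) = 0 := by
    intro x y z
    have e2 : leftSeriesN A 2 = setStar Set.univ ((leftSeriesN A 1 : AddSubgroup A) : Set A) := rfl
    have e1 : leftSeriesN A 1 = setStar Set.univ ((leftSeriesN A 0 : AddSubgroup A) : Set A) := rfl
    have h1 : star y z ∈ leftSeriesN A 1 := by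
      rw [e1]
      exact AddSubgroup.subset_closure
        (Set.mem_image2_of_mem (Set.mem_univ y) (by simp [leftSeriesN]))
    have h2 : star x (star y z) ∈ leftSeriesN A 2 := by
      rw [e2]
      exact AddSubgroup.subset_closure
        (Set.mem_image2_of_mem (Set.mem_univ x) h1)
    rw [h3] at h2
    exact AddSubgroup.mem_bot.mp h2
  rw [star_zsmul_right, main_formula H a n, smul_add, smul_smul, smul_smul,
    mul_comm k ((n - n ^ 2) / 2)]
end
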